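/- For every real x with |x| < 1, K(x) = (π/2) · Σ_{k=0}^∞ ((2k choose k)/4^k)² · x^{2k}, where K(x) := ∫_0^{π/2} (1 − x² sin²φ)^{−1/2} dφ is the complete elliptic integral of the first kind. -/

import Mathlib

open Real

noncomputable def cb (k : ℕ) : ℝ := ((2 * k).choose k : ℝ) / 4 ^ k

lemma cb_zero : cb 0 = 1 := by simp [cb]

lemma cb_nonneg (k : ℕ) : 0 ≤ cb k := by
  unfold cb; positivity

lemma cb_rec (k : ℕ) : 2 * (k + 1) * cb (k + 1) = (2 * k + 1) * cb k := by
  have h := Nat.succ_mul_centralBinom_succ k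
  have h' : ((k + 1 : ℕ) : ℝ) * ((2 * (k+1)).choose (k+1) : ℝ)
      = 2 * (2 * k + 1) * ((2 * k).choose k : ℝ) := by
    rw [Nat.centralBinom] at h
    exact_mod_cast congrArg (Nat.cast : ℕ → ℝ) h
  unfold cb
  push_cast at h' ⊢
  have h4 : ((4:ℝ)) ^ (k+1) ≠ 0 := by positivity
  have h4' : ((4:ℝ)) ^ k ≠ 0 := by positivity
  field_simp
  linear_combination (2 * (4:ℝ)^k) * h'

lemma cb_le_one (k : ℕ) : cb k ≤ 1 := by
  induction k with
  | zero => simp [cb_zero]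
  | succ n ih =>
    have h := cb_rec n
    have h2 : cb (n + 1) = (2 * n + 1) / (2 * (n + 1)) * cb n := by
      field_simp at h ⊢; linarith
    rw [h2]
    have : (2 * (n:ℝ) + 1) / (2 * (n + 1)) ≤ 1 := by
      rw [div_le_one (by positivity)]; linarith
    calc (2 * (n:ℝ) + 1) / (2 * (n + 1)) * cb n ≤ 1 * cb n := by
          exact mul_le_mul_of_nonneg_right this (cb_nonneg n)
      _ ≤ 1 := by rw [one_mul]; exact ih

lemma prod_eq_cb (k : ℕ) : ∏ i ∈ Finset.range k, (2 * (i : ℝ) + 1) / (2 * i + 2) = cb k := by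
  induction k with
  | zero => simp [cb_zero]
  | succ n ih =>
    rw [Finset.prod_range_succ, ih]
    have h := cb_rec n
    have h2 : cb (n + 1) = (2 * (n:ℝ) + 1) / (2 * (n + 1)) * cb n := by
      field_simp at h ⊢; linarith
    rw [h2]; ring

lemma summable_linear_geom {t : ℝ} (ht : |t| < 1) :
    Summable (fun k : ℕ => ((k : ℝ) + 1) * |t| ^ k) := by
  have h1 : Summable (fun k : ℕ => (k : ℝ) ^ 1 * |t| ^ k) :=
    summable_pow_mul_geometric_of_norm_lt_one 1 (by rwa [Real.norm_eq_abs, abs_abs])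
  have h2 : Summable (fun k : ℕ => |t| ^ k) :=
    summable_geometric_of_lt_one (abs_nonneg t) ht
  simpa [add_mul, pow_one] using h1.add h2

lemma summable_poly {t : ℝ} (ht : |t| < 1) {a : ℕ → ℝ} {C : ℝ}
    (ha : ∀ k, |a k| ≤ C * (k + 1)) : Summable (fun k => a k * t ^ k) := by
  apply Summable.of_norm_bounded (g := fun k : ℕ => C * (((k : ℝ) + 1) * |t| ^ k))
    ((summable_linear_geom ht).mul_left C)
  intro k
  rw [Real.norm_eq_abs, abs_mul, abs_pow]
  calc |a k| * |t| ^ k ≤ C * (k + 1) * |t| ^ k :=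
        mul_le_mul_of_nonneg_right (ha k) (by positivity)
    _ = C * (((k : ℝ) + 1) * |t| ^ k) := by ring

lemma summable_cb {t : ℝ} (ht : |t| < 1) : Summable (fun k => cb k * t ^ k) :=
  summable_poly ht (C := 1) (fun k => by
    rw [abs_of_nonneg (cb_nonneg k)]
    nlinarith [cb_le_one k, (Nat.cast_nonneg k : (0:ℝ) ≤ k)])

noncomputable def fS (t : ℝ) : ℝ := ∑' k : ℕ, cb k * t ^ k
noncomputable def dS (t : ℝ) : ℝ := ∑' k : ℕ, ((k : ℝ) + 1) * cb (k + 1) * t ^ k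

lemma summable_dS {t : ℝ} (ht : |t| < 1) :
    Summable (fun k : ℕ => ((k : ℝ) + 1) * cb (k + 1) * t ^ k) :=
  summable_poly ht (C := 1) (fun k => by
    rw [abs_of_nonneg (mul_nonneg (by positivity : (0:ℝ) ≤ (k:ℝ)+1) (cb_nonneg (k+1)))]
    nlinarith [cb_le_one (k+1), cb_nonneg (k+1), (Nat.cast_nonneg k : (0:ℝ) ≤ k)])

lemma summable_deriv_term {t : ℝ} (ht : |t| < 1) :
    Summable (fun k : ℕ => cb k * ((k : ℝ) * t ^ (k - 1))) := by
  rw [← summable_nat_add_iff 1]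
  exact (summable_dS ht).congr fun k => by push_cast [Nat.add_sub_cancel]; ring

lemma deriv_tsum_eq {t : ℝ} (ht : |t| < 1) :
    ∑' k : ℕ, cb k * ((k : ℝ) * t ^ (k - 1)) = dS t := by
  rw [Summable.tsum_eq_zero_add (summable_deriv_term ht)]
  simp only [Nat.cast_zero, zero_mul, mul_zero, zero_add, Nat.cast_add, Nat.cast_one,
    Nat.add_sub_cancel]
  unfold dS
  exact tsum_congr fun k => by push_cast; ring

lemma hasDerivAt_fS {t : ℝ} (ht : |t| < 1) : HasDerivAt fS (dS t) t := by
  rw [← deriv_tsum_eq ht]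
  set r : ℝ := (1 + |t|) / 2 with hr
  have hr0 : 0 < r := by positivity
  have htr : |t| < r := by rw [hr]; linarith [abs_nonneg t]
  have hr1 : r < 1 := by rw [hr]; linarith
  have hball : t ∈ Metric.ball (0 : ℝ) r := by
    simpa [Real.norm_eq_abs] using htr
  have hu : Summable (fun k : ℕ => (k : ℝ) * r ^ (k - 1)) := by
    rw [← summable_nat_add_iff 1]
    have h := summable_linear_geom (t := r) (by rwa [abs_of_pos hr0])
    rw [abs_of_pos hr0] at h
    exact h.congr fun k => by push_cast [Nat.add_sub_cancel]; ring
  refine hasDerivAt_tsum_of_isPreconnected (F := ℝ)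
    (u := fun k : ℕ => (k : ℝ) * r ^ (k - 1))
    (g := fun k z => cb k * z ^ k)
    (g' := fun k z => cb k * ((k : ℝ) * z ^ (k - 1)))
    hu Metric.isOpen_ball (convex_ball (0:ℝ) r).isPreconnected
    (fun k z _ => (hasDerivAt_pow k z).const_mul (cb k))
    (fun k z hz => ?_) (Metric.mem_ball_self hr0)
    (by simpa using summable_cb (t := 0) (by norm_num)) hball
  have hz' : |z| ≤ r := by
    rw [Metric.mem_ball, dist_zero_right, Real.norm_eq_abs] at hz
    exact hz.le
  rw [Real.norm_eq_abs, abs_mul, abs_mul, abs_pow]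
  rw [abs_of_nonneg (cb_nonneg k), Nat.abs_cast]
  calc cb k * ((k:ℝ) * |z| ^ (k-1)) ≤ 1 * ((k:ℝ) * r ^ (k-1)) := by
        apply mul_le_mul (cb_le_one k) ?_ (by positivity) one_pos.le
        exact mul_le_mul_of_nonneg_left (pow_le_pow_left₀ (abs_nonneg z) hz' _) (Nat.cast_nonneg k)
    _ = (k:ℝ) * r ^ (k-1) := one_mul _

lemma summable_a {t : ℝ} (ht : |t| < 1) :
    Summable (fun k : ℕ => 2 * (k : ℝ) * cb k * t ^ k) :=
  summable_poly ht (C := 2) (fun k => by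
    rw [abs_of_nonneg (mul_nonneg (by positivity : (0:ℝ) ≤ 2 * (k:ℝ)) (cb_nonneg k))]
    nlinarith [cb_le_one k, cb_nonneg k, (Nat.cast_nonneg k : (0:ℝ) ≤ k)])

lemma summable_b {t : ℝ} (ht : |t| < 1) :
    Summable (fun k : ℕ => (2 * (k : ℝ) + 1) * cb k * t ^ k) :=
  summable_poly ht (C := 2) (fun k => by
    rw [abs_of_nonneg (mul_nonneg (by positivity : (0:ℝ) ≤ 2 * (k:ℝ) + 1) (cb_nonneg k))]
    nlinarith [cb_le_one k, cb_nonneg k, (Nat.cast_nonneg k : (0:ℝ) ≤ k)])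

lemma cb_rec' (k : ℕ) : 2 * ((k:ℝ) + 1) * cb (k + 1) = (2 * (k:ℝ) + 1) * cb k := by
  have := cb_rec k
  push_cast at this ⊢
  linarith

lemma ode {t : ℝ} (ht : |t| < 1) : 2 * (1 - t) * dS t = fS t := by
  have hD2 : 2 * dS t = ∑' k : ℕ, (2 * (k:ℝ) + 1) * cb k * t ^ k := by
    rw [dS, ← tsum_mul_left]
    exact tsum_congr fun k => by rw [← cb_rec' k]; ring
  have hDt : 2 * t * dS t = ∑' k : ℕ, 2 * (k : ℝ) * cb k * t ^ k := by
    rw [dS, ← tsum_mul_left]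
    rw [Summable.tsum_eq_zero_add (summable_a ht)]
    simp only [Nat.cast_zero, mul_zero, zero_mul, zero_add]
    exact (tsum_congr fun k => by push_cast; ring).symm
  have : 2 * (1 - t) * dS t = 2 * dS t - 2 * t * dS t := by ring
  rw [this, hD2, hDt, ← Summable.tsum_sub (summable_b ht) (summable_a ht)]
  unfold fS
  exact tsum_congr fun k => by ring

lemma fS_sq {t : ℝ} (ht : |t| < 1) : fS t ^ 2 * (1 - t) = 1 := by
  set s : Set ℝ := Set.Ioo (-1 : ℝ) 1 with hs
  have hmem : ∀ z ∈ s, |z| < 1 := fun z hz => abs_lt.mpr ⟨hz.1, hz.2⟩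
  have hder : ∀ z ∈ s, HasDerivAt (fun z => fS z ^ 2 * (1 - z)) 0 z := by
    intro z hz
    have hf := hasDerivAt_fS (hmem z hz)
    have h1 : HasDerivAt (fun z : ℝ => 1 - z) (-1) z := by
      simpa using (hasDerivAt_id z).const_sub 1
    have : HasDerivAt (fun z => fS z ^ 2 * (1 - z))
        (((2:ℕ):ℝ) * fS z ^ (2 - 1) * dS z * (1 - z) + fS z ^ 2 * -1) z :=
      (hf.fun_pow 2).mul h1
    convert this using 1
    have hode := ode (hmem z hz)
    push_cast
    linear_combination (-(fS z)) * hode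
  have hconst := (convex_Ioo (-1:ℝ) 1).is_const_of_fderivWithin_eq_zero
    (𝕜 := ℝ) (f := fun z => fS z ^ 2 * (1 - z))
    (fun z hz => ((hder z hz).differentiableAt).differentiableWithinAt)
    (fun z hz => by
      rw [fderivWithin_of_isOpen isOpen_Ioo hz, (hder z hz).hasFDerivAt.fderiv]
      ext y
      simp)
    (x := t) (y := 0)
    ⟨by linarith [(abs_lt.mp ht).1], by linarith [(abs_lt.mp ht).2]⟩
    ⟨by norm_num, by norm_num⟩
  have hf0 : fS 0 = 1 := by
    unfold fS
    rw [tsum_eq_single 0 (fun b hb => by simp [zero_pow hb])]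
    simp [cb_zero]
  rw [hconst, hf0]; ring

lemma hasSum_cb {t : ℝ} (h0 : 0 ≤ t) (h1 : t < 1) :
    HasSum (fun k : ℕ => cb k * t ^ k) (1 / Real.sqrt (1 - t)) := by
  have ht : |t| < 1 := abs_lt.mpr ⟨by linarith, h1⟩
  have hsum := (summable_cb ht).hasSum
  have hfnn : 0 ≤ fS t := tsum_nonneg fun k => mul_nonneg (cb_nonneg k) (pow_nonneg h0 k)
  have h1t : (0:ℝ) < 1 - t := by linarith
  have hsq := fS_sq ht
  have : fS t = 1 / Real.sqrt (1 - t) := by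
    have h2 : fS t ^ 2 = 1 / (1 - t) := by
      field_simp
      nlinarith [hsq]
    have : fS t = Real.sqrt (1 / (1 - t)) := by
      rw [← h2, Real.sqrt_sq hfnn]
    rw [this, one_div, one_div, Real.sqrt_inv]
  rwa [← this]


lemma wallis_halfpi (k : ℕ) :
    ∫ φ in (0:ℝ)..(π/2), Real.sin φ ^ (2*k) = π / 2 * cb k := by
  have hInt : ∀ a b : ℝ, IntervalIntegrable (fun x => Real.sin x ^ (2*k)) MeasureTheory.volume a b :=
    fun a b => (continuous_sin.pow _).intervalIntegrable a b
  have hsub := intervalIntegral.integral_comp_sub_left (a := (0:ℝ)) (b := π/2)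
    (fun x => Real.sin x ^ (2*k)) π
  simp only [Real.sin_pi_sub, sub_zero] at hsub
  have hhalf : π - π/2 = π/2 := by ring
  rw [hhalf] at hsub
  have hadd := intervalIntegral.integral_add_adjacent_intervals
    (hInt 0 (π/2)) (hInt (π/2) π)
  have hfull : ∫ x in (0:ℝ)..π, Real.sin x ^ (2*k) = π * cb k := by
    rw [integral_sin_pow_even, prod_eq_cb]
  rw [← hsub] at hadd
  rw [hfull] at hadd
  linarith

theorem ellipticK_eq_series' (x : ℝ) (hx : |x| < 1) :
    (∫ φ in (0 : ℝ)..(π / 2), 1 / Real.sqrt (1 - x ^ 2 * Real.sin φ ^ 2)) =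
      (π / 2) * ∑' k : ℕ, (((2 * k).choose k : ℝ) / 4 ^ k) ^ 2 * x ^ (2 * k) := by
  have hx2 : x ^ 2 < 1 := by nlinarith [abs_nonneg x, abs_lt.mp hx, sq_abs x]
  have hx2' : |x| ^ 2 < 1 := by rwa [sq_abs]
  have key : HasSum (fun k : ℕ => ∫ φ in (0:ℝ)..(π/2), cb k * x ^ (2*k) * Real.sin φ ^ (2*k))
      (∫ φ in (0:ℝ)..(π/2), 1 / Real.sqrt (1 - x ^ 2 * Real.sin φ ^ 2)) := by
    apply intervalIntegral.hasSum_integral_of_dominated_convergence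
      (bound := fun k _ => |x| ^ (2*k))
    · intro k
      exact ((continuous_const.mul (continuous_sin.pow _))).aestronglyMeasurable
    · intro k
      filter_upwards with t _
      rw [Real.norm_eq_abs, abs_mul, abs_mul, abs_pow, abs_pow, abs_of_nonneg (cb_nonneg k)]
      calc cb k * |x| ^ (2*k) * |Real.sin t| ^ (2*k)
          ≤ 1 * |x| ^ (2*k) * 1 := by
            apply mul_le_mul (mul_le_mul_of_nonneg_right (cb_le_one k) (by positivity))
              (pow_le_one₀ (abs_nonneg _) (abs_sin_le_one t)) (by positivity) (by positivity)
        _ = |x| ^ (2*k) := by ring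
    · filter_upwards with t _
      have : (fun k : ℕ => |x| ^ (2*k)) = fun k : ℕ => (|x|^2) ^ k := by
        funext k; rw [pow_mul]
      rw [this]
      exact summable_geometric_of_lt_one (by positivity) hx2'
    · exact intervalIntegrable_const
    · filter_upwards with t _
      have h0 : 0 ≤ x ^ 2 * Real.sin t ^ 2 := by positivity
      have h1 : x ^ 2 * Real.sin t ^ 2 < 1 := by
        nlinarith [sin_sq_le_one t, sq_nonneg x, sq_nonneg (Real.sin t)]
      have := hasSum_cb h0 h1
      have heq : (fun k : ℕ => cb k * (x ^ 2 * Real.sin t ^ 2) ^ k)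
          = fun k : ℕ => cb k * x ^ (2*k) * Real.sin t ^ (2*k) := by
        funext k
        rw [mul_pow, ← pow_mul, ← pow_mul]
        ring
      rwa [heq] at this
  have hval : ∀ k : ℕ, (∫ φ in (0:ℝ)..(π/2), cb k * x ^ (2*k) * Real.sin φ ^ (2*k))
      = π / 2 * (cb k ^ 2 * x ^ (2*k)) := by
    intro k
    rw [intervalIntegral.integral_const_mul, wallis_halfpi k]
    ring
  have key2 : HasSum (fun k : ℕ => π / 2 * (cb k ^ 2 * x ^ (2*k)))
      (∫ φ in (0:ℝ)..(π/2), 1 / Real.sqrt (1 - x ^ 2 * Real.sin φ ^ 2)) := by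
    rwa [show (fun k : ℕ => π / 2 * (cb k ^ 2 * x ^ (2*k)))
      = fun k : ℕ => ∫ φ in (0:ℝ)..(π/2), cb k * x ^ (2*k) * Real.sin φ ^ (2*k)
      from funext fun k => (hval k).symm]
  rw [← key2.tsum_eq, tsum_mul_left]
  exact congrArg _ (tsum_congr fun k => by rw [cb])

/-- The complete elliptic integral of the first kind. -/
noncomputable def ellipticK (x : ℝ) : ℝ :=
  ∫ φ in (0 : ℝ)..(π / 2), 1 / Real.sqrt (1 - x ^ 2 * Real.sin φ ^ 2)

theorem ellipticK_eq_series (x : ℝ) (hx : |x| < 1) :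
    ellipticK x =
      (π / 2) * ∑' k : ℕ, (((2 * k).choose k : ℝ) / 4 ^ k) ^ 2 * x ^ (2 * k) := by
  exact ellipticK_eq_series' x hx
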